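/- For every real number p ∈ [0,1/2], the Kullback–Leibler divergence between Bernoulli(2p) and Bernoulli(p) satisfies 2p·log 2 + (1−2p)·log((1−2p)/(1−p)) ≥ p·(log 4 − 1), where terms of the form 0·log 0 are interpreted as 0. -/
import Mathlib

theorem kl_bernoulli_two_p_ge (p : ℝ) (hp : p ∈ Set.Icc (0 : ℝ) (1/2)) :
    p * (Real.log 4 - 1) ≤
      2 * p * Real.log 2 + (1 - 2 * p) * Real.log ((1 - 2 * p) / (1 - p)) := by
  obtain ⟨h0, h1⟩ := hp
  have h4 : Real.log 4 = 2 * Real.log 2 := by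
    rw [show (4:ℝ) = 2^2 by norm_num, Real.log_pow]; push_cast; ring
  rw [h4]
  rcases eq_or_lt_of_le h1 with h | h
  · have hz : 1 - 2 * p = 0 := by linarith
    rw [hz]
    simp
    nlinarith
  · have hx : (0:ℝ) < 1 - 2*p := by linarith
    have hy : (0:ℝ) < 1 - p := by linarith
    have hlog : 1 - (1-p)/(1-2*p) ≤ Real.log ((1 - 2*p)/(1-p)) := by
      have h2 := Real.log_le_sub_one_of_pos (show (0:ℝ) < (1-p)/(1-2*p) from div_pos hy hx)
      rw [Real.log_div hy.ne' hx.ne'] at h2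
      rw [Real.log_div hx.ne' hy.ne']
      linarith
    have key : -p ≤ (1 - 2*p) * Real.log ((1 - 2*p)/(1-p)) := by
      have h3 := mul_le_mul_of_nonneg_left hlog hx.le
      have hd : (1-2*p) * (1 - (1-p)/(1-2*p)) = -p := by field_simp; ring
      linarith [hd ▸ h3]
    linarith [key]
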